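/- Let $m > 2$ be prime and let $\Lambda \subset \mathbb{Z}^n$ be an orthogonal set of the finite convolution $\mu_k = \delta_{R_1^{-1}D_1} * \cdots * \delta_{(R_k\cdots R_1)^{-1}D_k}$ (indices reordered appropriately), where $R_i = \operatorname{diag}[p_{i,1},\dots,p_{i,n}]$ and each $\mathcal{Z}(m_{D_i}) \subset \bigcup_{l=1}^{m-1}\left(\frac{l}{m}\{1,\dots,m-1\}^n + \mathbb{Z}^n\right)$. If $m \nmid p_{k,j_0}$ for some $j_0$, and $U_{k-1} := R_1\cdots R_{k-1}\,\mathcal{Z}(m_{D_{k-1}})$, then $\#(\Lambda \cap U_{k-1}) < m$. -/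

import Mathlib

open MeasureTheory

/-- The canonical embedding `ℤⁿ → ℝⁿ`. -/
noncomputable def ιv {n : ℕ} (z : Fin n → ℤ) : EuclideanSpace ℝ (Fin n) :=
  WithLp.toLp 2 (fun t => (z t : ℝ))

/-- If `m > 2` is prime, `Λ ⊂ ℤⁿ` is an orthogonal set of the finite convolution `μ_k`
(`(Λ-Λ)\{0} ⊂ Z(μ̂_k) = ⋃_{i=1}^k R₁⋯Rᵢ Z(m_{D_i})`), each `Z(m_{D_i})` is of
Sierpinski type, and `m ∤ p_{k,j₀}`, then `#(Λ ∩ U_{k-1}) < m` where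
`U_{k-1} = R₁⋯R_{k-1} Z(m_{D_{k-1}})`. -/
theorem stmt18 {n : ℕ} (m k : ℕ) (hm : m.Prime) (hm2 : 2 < m) (hk : 2 ≤ k)
    (p : ℕ → Fin n → ℤ) (hexp : ∀ i ∈ Finset.Icc 1 k, ∀ t, 1 < |p i t|)
    (D : ℕ → Finset (Fin n → ℤ)) (hcard : ∀ i ∈ Finset.Icc 1 k, (D i).card = m)
    (Z : ℕ → Set (EuclideanSpace ℝ (Fin n)))
    (hZdef : ∀ i, Z i = {ξ : EuclideanSpace ℝ (Fin n) | ∑ d ∈ D i,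
        Complex.exp (2 * (Real.pi : ℂ) * Complex.I * ((inner ℝ ξ (ιv d) : ℝ) : ℂ)) = 0})
    (hZ : ∀ i ∈ Finset.Icc 1 k, Z i ⊆
        {ξ : EuclideanSpace ℝ (Fin n) | ∃ l ∈ Finset.Icc 1 (m - 1), ∃ v : Fin n → ℤ,
          (∀ t, 1 ≤ v t ∧ v t ≤ (m : ℤ) - 1) ∧ ∃ z : Fin n → ℤ,
            ξ = (WithLp.toLp 2 (fun t => (l : ℝ) / m * v t + z t) : EuclideanSpace ℝ (Fin n))})
    (Λ : Set (Fin n → ℤ))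
    (horth : ∀ l ∈ Λ, ∀ l' ∈ Λ, l ≠ l' → ∃ i ∈ Finset.Icc 1 k, ∃ ξ ∈ Z i,
        ιv (l - l') =
          (WithLp.toLp 2 (fun t => (∏ j ∈ Finset.Icc 1 i, (p j t : ℝ)) * ξ t) : EuclideanSpace ℝ (Fin n)))
    (j₀ : Fin n) (hdiv : ¬ (m : ℤ) ∣ p k j₀) :
    (Λ ∩ {l : Fin n → ℤ | ∃ ξ ∈ Z (k - 1),
        ιv l = (WithLp.toLp 2 (fun t => (∏ j ∈ Finset.Icc 1 (k - 1), (p j t : ℝ)) * ξ t) :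
          EuclideanSpace ℝ (Fin n))}).Finite ∧
    (Λ ∩ {l : Fin n → ℤ | ∃ ξ ∈ Z (k - 1),
        ιv l = (WithLp.toLp 2 (fun t => (∏ j ∈ Finset.Icc 1 (k - 1), (p j t : ℝ)) * ξ t) :
          EuclideanSpace ℝ (Fin n))}).ncard < m := by
  haveI : Fact m.Prime := ⟨hm⟩
  have hmp : Prime (m : ℤ) := Nat.prime_iff_prime_int.mp hm
  have hmR : (m : ℝ) ≠ 0 := by
    exact_mod_cast hm.ne_zero
  set S := Λ ∩ {l : Fin n → ℤ | ∃ ξ ∈ Z (k - 1),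
      ιv l = (WithLp.toLp 2 (fun t => (∏ j ∈ Finset.Icc 1 (k - 1), (p j t : ℝ)) * ξ t) :
        EuclideanSpace ℝ (Fin n))} with hSdef
  -- key lemma: each relevant vector gives a witness c with m ∤ c
  have key : ∀ i ∈ Finset.Icc 1 k, ∀ ξ ∈ Z i, ∀ d : Fin n → ℤ,
      ιv d = (WithLp.toLp 2 (fun t => (∏ j ∈ Finset.Icc 1 i, (p j t : ℝ)) * ξ t) :
        EuclideanSpace ℝ (Fin n)) →
      ∃ c : ℤ, (∏ j ∈ Finset.Icc 1 i, p j j₀) * c = m * d j₀ ∧ ¬ (m : ℤ) ∣ c := by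
    intro i hi ξ hξ d hd
    obtain ⟨l, hl, v, hv, z, hz⟩ := hZ i hi hξ
    refine ⟨(l : ℤ) * v j₀ + m * z j₀, ?_, ?_⟩
    · have h1 := congrArg (fun x => x j₀) hd
      have h2 := congrArg (fun x => x j₀) hz
      have hreal : (d j₀ : ℝ) = (∏ j ∈ Finset.Icc 1 i, (p j j₀ : ℝ)) *
          ((l : ℝ) / m * v j₀ + z j₀) := by
        simpa [ιv, h2] using h1
      have haux : ((l : ℝ) / m * (v j₀ : ℝ) + (z j₀ : ℝ)) * m =
          (l : ℝ) * (v j₀ : ℝ) + (m : ℝ) * (z j₀ : ℝ) := by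
        field_simp
      have key2 : ((∏ j ∈ Finset.Icc 1 i, p j j₀ : ℤ) : ℝ) *
          (((l : ℤ) * v j₀ + m * z j₀ : ℤ) : ℝ) = (m : ℝ) * ((d j₀ : ℤ) : ℝ) := by
        rw [hreal]; push_cast; rw [← haux]; ring
      exact_mod_cast key2
    · intro hdvd
      have hml : (m : ℤ) ∣ (l : ℤ) * v j₀ := by
        have := dvd_sub hdvd (dvd_mul_right (m : ℤ) (z j₀))
        simpa using this
      have hl' : 1 ≤ l ∧ l ≤ m - 1 := Finset.mem_Icc.mp hl
      rcases hmp.dvd_mul.mp hml with h | h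
      · have : (m : ℤ) ∣ (l : ℤ) := h
        have hml' : m ∣ l := Int.ofNat_dvd.mp this
        have := Nat.le_of_dvd (by omega) hml'
        omega
      · have h1 := (hv j₀).1
        have h2 := (hv j₀).2
        have := Int.le_of_dvd (by omega) h
        omega
  have hk1 : k - 1 ∈ Finset.Icc 1 k := by
    rw [Finset.mem_Icc]; omega
  set P : ℤ := ∏ j ∈ Finset.Icc 1 (k - 1), p j j₀ with hPdef
  have hpne : ∀ i ∈ Finset.Icc 1 k, p i j₀ ≠ 0 := by
    intro i hi h
    have := hexp i hi j₀
    rw [h] at this; simp at this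
  have hPne : P ≠ 0 := by
    rw [hPdef, Finset.prod_ne_zero_iff]
    intro i hi
    exact hpne i (Finset.mem_Icc.mp hi |> fun h => Finset.mem_Icc.mpr ⟨h.1, h.2.trans (by omega)⟩)
  have hex : ∀ l ∈ S, ∃ c : ℤ, P * c = m * l j₀ ∧ ¬ (m : ℤ) ∣ c := by
    intro l hl
    obtain ⟨hlΛ, ξ, hξ, heq⟩ := hl
    exact key (k - 1) hk1 ξ hξ l heq
  choose! c hc1 hc2 using hex
  -- injectivity of l ↦ (c l : ZMod m) on S
  have hinj : Set.InjOn (fun l => ((c l : ℤ) : ZMod m)) S := by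
    intro l hl l' hl' hcc
    by_contra hne
    obtain ⟨i, hi, ξ, hξ, heq⟩ := horth l hl.1 l' hl'.1 hne
    obtain ⟨e, he1, he2⟩ := key i hi ξ hξ (l - l') heq
    have hdvd : (m : ℤ) ∣ c l - c l' := by
      have h0 : ((c l - c l' : ℤ) : ZMod m) = 0 := by
        push_cast
        simp only at hcc
        rw [hcc]; ring
      exact (ZMod.intCast_zmod_eq_zero_iff_dvd _ m).mp h0
    have hsub : (l - l') j₀ = l j₀ - l' j₀ := rfl
    have hmain : (∏ j ∈ Finset.Icc 1 i, p j j₀) * e = P * (c l - c l') := by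
      rw [he1, hsub, mul_sub, ← hc1 l hl, ← hc1 l' hl', mul_sub]
    have hi' := Finset.mem_Icc.mp hi
    have hIcc : ∀ x : ℕ, Finset.Icc 1 x = Finset.Ioc 0 x := by
      intro x; ext y; simp [Finset.mem_Icc, Finset.mem_Ioc]; omega
    rcases Nat.lt_or_ge i k with hik | hik
    · -- i ≤ k - 1
      have hile : i ≤ k - 1 := by omega
      have hsplit : P = (∏ j ∈ Finset.Icc 1 i, p j j₀) *
          ∏ j ∈ Finset.Ioc i (k - 1), p j j₀ := by
        rw [hPdef, hIcc, hIcc]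
        exact (Finset.prod_Ioc_consecutive _ (Nat.zero_le i) hile).symm
      have hQne : (∏ j ∈ Finset.Icc 1 i, p j j₀) ≠ 0 := by
        rw [Finset.prod_ne_zero_iff]
        intro x hx
        have hx' := Finset.mem_Icc.mp hx
        exact hpne x (Finset.mem_Icc.mpr ⟨hx'.1, by omega⟩)
      have : e = (∏ j ∈ Finset.Ioc i (k - 1), p j j₀) * (c l - c l') := by
        have h2 : (∏ j ∈ Finset.Icc 1 i, p j j₀) * e =
            (∏ j ∈ Finset.Icc 1 i, p j j₀) *
              ((∏ j ∈ Finset.Ioc i (k - 1), p j j₀) * (c l - c l')) := by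
          rw [hmain, hsplit]; ring
        exact mul_left_cancel₀ hQne h2
      exact he2 (this ▸ Dvd.dvd.mul_left hdvd _)
    · -- i = k
      have hik' : i = k := by omega
      rw [hik'] at hmain
      have hsplit : (∏ j ∈ Finset.Icc 1 k, p j j₀) = P * p k j₀ := by
        rw [hPdef, hIcc, hIcc]
        have h1 : Finset.Ioc (k - 1) k = {k} := by
          ext x; simp [Finset.mem_Ioc]; omega
        have h2 := Finset.prod_Ioc_consecutive (fun j => p j j₀)
          (Nat.zero_le (k - 1)) (Nat.sub_le k 1)
        rw [h1] at h2
        simp at h2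
        exact h2.symm
      have heq2 : p k j₀ * e = c l - c l' := by
        have h3 : P * (p k j₀ * e) = P * (c l - c l') := by
          rw [← hmain, hsplit]; ring
        exact mul_left_cancel₀ hPne h3
      rw [← heq2] at hdvd
      rcases hmp.dvd_mul.mp hdvd with h | h
      · exact hdiv h
      · exact he2 h
  have hfin : S.Finite := Set.Finite.of_finite_image (Set.toFinite _) hinj
  refine ⟨hfin, ?_⟩
  have himg : (fun l => ((c l : ℤ) : ZMod m)) '' S ⊂ Set.univ := by
    rw [Set.ssubset_univ_iff]
    intro h
    have h0 : (0 : ZMod m) ∈ (fun l => ((c l : ℤ) : ZMod m)) '' S := by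
      rw [h]; trivial
    obtain ⟨l, hlS, hl0⟩ := h0
    exact hc2 l hlS ((ZMod.intCast_zmod_eq_zero_iff_dvd _ m).mp hl0)
  have h1 : S.ncard = ((fun l => ((c l : ℤ) : ZMod m)) '' S).ncard :=
    (Set.ncard_image_of_injOn hinj).symm
  have h2 : ((fun l => ((c l : ℤ) : ZMod m)) '' S).ncard <
      (Set.univ : Set (ZMod m)).ncard :=
    Set.ncard_lt_ncard himg (Set.toFinite _)
  have h3 : (Set.univ : Set (ZMod m)).ncard = m := by
    rw [Set.ncard_univ, Nat.card_zmod]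
  omega
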